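/- The ring of invariants of the two-dimensional torus T = (ℂ*)² acting on ℂ[X₂,X₃,Y₂,Y₃] by (λ,μ)·X₂ = λ⁻¹μX₂, (λ,μ)·X₃ = λμ⁻¹X₃, (λ,μ)·Y₂ = λ⁻¹μY₂, (λ,μ)·Y₃ = λμ⁻¹Y₃ is the subalgebra generated by the monomials X₂X₃, X₂Y₃, X₃Y₂, Y₂Y₃, and this subalgebra is isomorphic to ℂ[p,q,r,s]/(ps−qr). -/

import Mathlib

open MvPolynomial

/-- The action of `(λ, μ) ∈ T = ℂ* × ℂ*` on `ℂ[X₂, X₃, Y₂, Y₃]` (variables indexed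
`0 = X₂`, `1 = X₃`, `2 = Y₂`, `3 = Y₃`) by
`X₂ ↦ λ⁻¹μ X₂`, `X₃ ↦ λμ⁻¹ X₃`, `Y₂ ↦ λ⁻¹μ Y₂`, `Y₃ ↦ λμ⁻¹ Y₃`. -/
noncomputable def torusAct (l m : ℂˣ) :
    MvPolynomial (Fin 4) ℂ →ₐ[ℂ] MvPolynomial (Fin 4) ℂ :=
  aeval ![((l : ℂ)⁻¹ * (m : ℂ)) • X 0, ((l : ℂ) * (m : ℂ)⁻¹) • X 1,
    ((l : ℂ)⁻¹ * (m : ℂ)) • X 2, ((l : ℂ) * (m : ℂ)⁻¹) • X 3]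

/-- The monomials `X₂X₃`, `X₂Y₃`, `X₃Y₂`, `Y₂Y₃`. -/
noncomputable def torusGens : Set (MvPolynomial (Fin 4) ℂ) :=
  {X 0 * X 1, X 0 * X 3, X 1 * X 2, X 2 * X 3}

lemma monomial_eq_four (a : Fin 4 →₀ ℕ) (c : ℂ) :
    monomial a c = C c * X 0 ^ a 0 * X 1 ^ a 1 * X 2 ^ a 2 * X 3 ^ a 3 := by
  rw [monomial_eq, Finsupp.prod_fintype _ _ (fun i => pow_zero _), Fin.prod_univ_four]
  ring

lemma torusAct_monomial (l m : ℂˣ) (a : Fin 4 →₀ ℕ) (c : ℂ) :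
    torusAct l m (monomial a c) =
      monomial a ((((l:ℂ)⁻¹ * m) ^ (a 0 + a 2) * ((l:ℂ) * (m:ℂ)⁻¹) ^ (a 1 + a 3)) * c) := by
  rw [torusAct, aeval_monomial, Finsupp.prod_fintype _ _ (fun i => pow_zero _),
    Fin.prod_univ_four]
  simp only [Matrix.cons_val_zero, Matrix.cons_val_one, Matrix.head_cons,
    Matrix.cons_val_two, Matrix.tail_cons, Matrix.cons_val_three]
  rw [monomial_eq_four]
  simp only [smul_pow, smul_eq_C_mul, algebraMap_eq, ← C_pow]
  simp only [C_mul, C_pow]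
  ring

lemma coeff_torusAct (l m : ℂˣ) (f : MvPolynomial (Fin 4) ℂ) (b : Fin 4 →₀ ℕ) :
    coeff b (torusAct l m f) =
      (((l:ℂ)⁻¹ * m) ^ (b 0 + b 2) * ((l:ℂ) * (m:ℂ)⁻¹) ^ (b 1 + b 3)) * coeff b f := by
  conv_lhs => rw [f.as_sum, map_sum]
  simp only [torusAct_monomial, coeff_sum, coeff_monomial]
  rw [Finset.sum_ite_eq' f.support b]
  split_ifs with h
  · rfl
  · rw [notMem_support_iff.mp h, mul_zero]

lemma balanced_of_invariant {f : MvPolynomial (Fin 4) ℂ}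
    (hf : ∀ l m : ℂˣ, torusAct l m f = f) {a : Fin 4 →₀ ℕ} (ha : a ∈ f.support) :
    a 0 + a 2 = a 1 + a 3 := by
  have h2 : ((2:ℂ) ≠ 0) := by norm_num
  have := hf (Units.mk0 2 h2) 1
  have hc := congrArg (coeff a) this
  rw [coeff_torusAct] at hc
  have hne : coeff a f ≠ 0 := mem_support_iff.mp ha
  have hsc : ((2:ℂ)⁻¹ * 1) ^ (a 0 + a 2) * ((2:ℂ) * (1:ℂ)⁻¹) ^ (a 1 + a 3) = 1 := by
    by_contra hs
    apply hne
    have := hc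
    nth_rewrite 2 [← one_mul (coeff a f)] at this
    rcases mul_eq_mul_right_iff.mp this with h | h
    · exact absurd h (by simpa using hs)
    · exact h
  have h2p : ((2:ℂ)) ^ (a 1 + a 3) = 2 ^ (a 0 + a 2) := by
    have h20 : ((2:ℂ)) ^ (a 0 + a 2) ≠ 0 := pow_ne_zero _ h2
    field_simp at hsc
    exact ((inv_mul_eq_one₀ h20).mp (by simpa using hsc)).symm
  have hcast : ((2^(a 1 + a 3) : ℕ) : ℂ) = ((2^(a 0 + a 2) : ℕ) : ℂ) := by push_cast; exact h2p
  exact (Nat.pow_right_injective (le_refl 2) (Nat.cast_injective hcast)).symm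

noncomputable def mk4 (w x y z : ℕ) : Fin 4 →₀ ℕ :=
  Finsupp.single 0 w + Finsupp.single 1 x + Finsupp.single 2 y + Finsupp.single 3 z

@[simp] lemma mk4_apply0 (w x y z : ℕ) : mk4 w x y z 0 = w := by simp [mk4, Finsupp.single_apply]
@[simp] lemma mk4_apply1 (w x y z : ℕ) : mk4 w x y z 1 = x := by simp [mk4, Finsupp.single_apply]
@[simp] lemma mk4_apply2 (w x y z : ℕ) : mk4 w x y z 2 = y := by simp [mk4, Finsupp.single_apply]
@[simp] lemma mk4_apply3 (w x y z : ℕ) : mk4 w x y z 3 = z := by simp [mk4, Finsupp.single_apply]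

lemma eq_mk4 (a : Fin 4 →₀ ℕ) : a = mk4 (a 0) (a 1) (a 2) (a 3) := by
  ext i
  fin_cases i <;> simp

lemma mk4_add (w x y z w' x' y' z' : ℕ) :
    mk4 w x y z + mk4 w' x' y' z' = mk4 (w+w') (x+x') (y+y') (z+z') := by
  ext i; fin_cases i <;> simp

lemma X_mul_X (i j : Fin 4) :
    (X i : MvPolynomial (Fin 4) ℂ) * X j
      = monomial (Finsupp.single i 1 + Finsupp.single j 1) 1 := by
  rw [X, X, monomial_mul, mul_one]

lemma monomial_balanced_mem (k : ℕ) :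
    ∀ w x y z : ℕ, w + y = k → x + z = k → ∀ c : ℂ,
      monomial (mk4 w x y z) c ∈ Algebra.adjoin ℂ torusGens := by
  induction k with
  | zero =>
    rintro w x y z hw hx c
    obtain ⟨rfl, rfl⟩ : w = 0 ∧ y = 0 := by omega
    obtain ⟨rfl, rfl⟩ : x = 0 ∧ z = 0 := by omega
    have : mk4 0 0 0 0 = 0 := by ext i; fin_cases i <;> simp
    rw [this]
    simpa [monomial_zero'] using Subalgebra.algebraMap_mem (Algebra.adjoin ℂ torusGens) c
  | succ k ih =>
    rintro w x y z hw hx c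
    have hgen : ∀ p ∈ torusGens, p ∈ Algebra.adjoin ℂ torusGens :=
      fun p hp => Algebra.subset_adjoin hp
    rcases Nat.eq_zero_or_pos w with hw0 | hw0
    · -- w = 0, so y = k+1 > 0
      subst hw0
      rcases Nat.eq_zero_or_pos x with hx0 | hx0
      · -- use X2 * X3
        subst hx0
        obtain ⟨y', rfl⟩ : ∃ y', y = y' + 1 := ⟨k, by omega⟩
        obtain ⟨z', rfl⟩ : ∃ z', z = z' + 1 := ⟨k, by omega⟩
        have : monomial (mk4 0 0 (y'+1) (z'+1)) c
            = monomial (mk4 0 0 y' z') c * (X 2 * X 3) := by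
          rw [X_mul_X, monomial_mul, mul_one]
          congr 1
          rw [show Finsupp.single (2 : Fin 4) 1 + Finsupp.single 3 1 = mk4 0 0 1 1 by
            ext i; fin_cases i <;> simp, mk4_add]
        rw [this]
        exact mul_mem (ih 0 0 y' z' (by omega) (by omega) c)
          (hgen _ (by simp [torusGens]))
      · -- x > 0, use X1 * X2
        obtain ⟨x', rfl⟩ : ∃ x', x = x' + 1 := ⟨x - 1, by omega⟩
        obtain ⟨y', rfl⟩ : ∃ y', y = y' + 1 := ⟨k, by omega⟩
        have : monomial (mk4 0 (x'+1) (y'+1) z) c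
            = monomial (mk4 0 x' y' z) c * (X 1 * X 2) := by
          rw [X_mul_X, monomial_mul, mul_one]
          congr 1
          rw [show Finsupp.single (1 : Fin 4) 1 + Finsupp.single 2 1 = mk4 0 1 1 0 by
            ext i; fin_cases i <;> simp, mk4_add]
          norm_num
        rw [this]
        exact mul_mem (ih 0 x' y' z (by omega) (by omega) c)
          (hgen _ (by simp [torusGens]))
    · obtain ⟨w', rfl⟩ : ∃ w', w = w' + 1 := ⟨w - 1, by omega⟩
      rcases Nat.eq_zero_or_pos x with hx0 | hx0
      · -- use X0 * X3
        subst hx0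
        obtain ⟨z', rfl⟩ : ∃ z', z = z' + 1 := ⟨k, by omega⟩
        have : monomial (mk4 (w'+1) 0 y (z'+1)) c
            = monomial (mk4 w' 0 y z') c * (X 0 * X 3) := by
          rw [X_mul_X, monomial_mul, mul_one]
          congr 1
          rw [show Finsupp.single (0 : Fin 4) 1 + Finsupp.single 3 1 = mk4 1 0 0 1 by
            ext i; fin_cases i <;> simp, mk4_add]
          norm_num
        rw [this]
        exact mul_mem (ih w' 0 y z' (by omega) (by omega) c)
          (hgen _ (by simp [torusGens]))
      · -- use X0 * X1
        obtain ⟨x', rfl⟩ : ∃ x', x = x' + 1 := ⟨x - 1, by omega⟩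
        have : monomial (mk4 (w'+1) (x'+1) y z) c
            = monomial (mk4 w' x' y z) c * (X 0 * X 1) := by
          rw [X_mul_X, monomial_mul, mul_one]
          congr 1
          rw [show Finsupp.single (0 : Fin 4) 1 + Finsupp.single 1 1 = mk4 1 1 0 0 by
            ext i; fin_cases i <;> simp, mk4_add]
          norm_num
        rw [this]
        exact mul_mem (ih w' x' y z (by omega) (by omega) c)
          (hgen _ (by simp [torusGens]))

lemma monomial_mem_adjoin {a : Fin 4 →₀ ℕ} (h : a 0 + a 2 = a 1 + a 3) (c : ℂ) :
    monomial a c ∈ Algebra.adjoin ℂ torusGens := by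
  rw [eq_mk4 a]
  exact monomial_balanced_mem (a 1 + a 3) (a 0) (a 1) (a 2) (a 3) h rfl c

lemma mk4_injective {w x y z w' x' y' z' : ℕ} (h : mk4 w x y z = mk4 w' x' y' z') :
    w = w' ∧ x = x' ∧ y = y' ∧ z = z' := by
  refine ⟨?_, ?_, ?_, ?_⟩
  · have := DFunLike.congr_fun h 0; simpa using this
  · have := DFunLike.congr_fun h 1; simpa using this
  · have := DFunLike.congr_fun h 2; simpa using this
  · have := DFunLike.congr_fun h 3; simpa using this

/-- The map `ℂ[p,q,r,s] → ℂ[X₂,X₃,Y₂,Y₃]`, `p ↦ X₂X₃` etc. -/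
noncomputable def phi : MvPolynomial (Fin 4) ℂ →ₐ[ℂ] MvPolynomial (Fin 4) ℂ :=
  aeval ![X 0 * X 1, X 0 * X 3, X 1 * X 2, X 2 * X 3]

noncomputable def psi (a : Fin 4 →₀ ℕ) : Fin 4 →₀ ℕ :=
  mk4 (a 0 + a 1) (a 0 + a 2) (a 2 + a 3) (a 1 + a 3)

lemma phi_monomial (a : Fin 4 →₀ ℕ) (c : ℂ) :
    phi (monomial a c) = monomial (psi a) c := by
  rw [phi, aeval_monomial, Finsupp.prod_fintype _ _ (fun i => pow_zero _), Fin.prod_univ_four]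
  simp only [Matrix.cons_val_zero, Matrix.cons_val_one, Matrix.head_cons,
    Matrix.cons_val_two, Matrix.tail_cons, Matrix.cons_val_three]
  rw [monomial_eq_four, psi]
  simp only [mk4_apply0, mk4_apply1, mk4_apply2, mk4_apply3, algebraMap_eq]
  rw [mul_pow, mul_pow, mul_pow, mul_pow]
  rw [pow_add, pow_add, pow_add, pow_add]
  ring

/-- the relation ideal -/
noncomputable def relI : Ideal (MvPolynomial (Fin 4) ℂ) :=
  Ideal.span {(X 0 : MvPolynomial (Fin 4) ℂ) * X 3 - X 1 * X 2}

lemma rel_mem : ((X 0 : MvPolynomial (Fin 4) ℂ) * X 3 - X 1 * X 2) ∈ relI :=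
  Ideal.subset_span rfl

lemma reduce_mem (k : ℕ) : ∀ (w x y z : ℕ) (c : ℂ),
    monomial (mk4 (w+k) x y (z+k)) c - monomial (mk4 w (x+k) (y+k) z) c ∈ relI := by
  induction k with
  | zero => intro w x y z c; simp
  | succ k ih =>
    intro w x y z c
    have key : monomial (mk4 (w+(k+1)) x y (z+(k+1))) c
        - monomial (mk4 (w+k) (x+1) (y+1) (z+k)) c ∈ relI := by
      have h1 : monomial (mk4 (w+(k+1)) x y (z+(k+1))) c
          = monomial (mk4 (w+k) x y (z+k)) c * (X 0 * X 3) := by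
        rw [monomial_eq_four, monomial_eq_four]
        simp only [mk4_apply0, mk4_apply1, mk4_apply2, mk4_apply3]
        ring
      have h2 : monomial (mk4 (w+k) (x+1) (y+1) (z+k)) c
          = monomial (mk4 (w+k) x y (z+k)) c * (X 1 * X 2) := by
        rw [monomial_eq_four, monomial_eq_four]
        simp only [mk4_apply0, mk4_apply1, mk4_apply2, mk4_apply3]
        ring
      rw [h1, h2, ← mul_sub]
      exact Ideal.mul_mem_left _ _ rel_mem
    have step : monomial (mk4 (w+k) (x+1) (y+1) (z+k)) c
        - monomial (mk4 w (x+(k+1)) (y+(k+1)) z) c ∈ relI := by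
      rw [show x+(k+1) = x+1+k from by omega, show y+(k+1) = y+1+k from by omega]
      exact ih w (x+1) (y+1) z c
    have := Ideal.add_mem relI key step
    simpa using this

/-- normal form of an exponent vector -/
noncomputable def nf (a : Fin 4 →₀ ℕ) : Fin 4 →₀ ℕ :=
  mk4 (a 0 - min (a 0) (a 3)) (a 1 + min (a 0) (a 3))
      (a 2 + min (a 0) (a 3)) (a 3 - min (a 0) (a 3))

lemma nf_normal (a : Fin 4 →₀ ℕ) : min (nf a 0) (nf a 3) = 0 := by
  simp only [nf, mk4_apply0, mk4_apply3]; omega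

lemma psi_nf (a : Fin 4 →₀ ℕ) : psi (nf a) = psi a := by
  simp only [psi, nf, mk4_apply0, mk4_apply1, mk4_apply2, mk4_apply3]
  congr 1 <;> omega

lemma monomial_sub_nf (a : Fin 4 →₀ ℕ) (c : ℂ) :
    monomial a c - monomial (nf a) c ∈ relI := by
  set m := min (a 0) (a 3) with hm
  have h : a = mk4 ((a 0 - m) + m) (a 1) (a 2) ((a 3 - m) + m) := by
    ext i; fin_cases i <;> simp <;> omega
  have hnf : nf a = mk4 (a 0 - m) (a 1 + m) (a 2 + m) (a 3 - m) := rfl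
  rw [hnf]
  nth_rewrite 1 [h]
  exact reduce_mem m (a 0 - m) (a 1) (a 2) (a 3 - m) c

lemma psi_inj_normal {a b : Fin 4 →₀ ℕ} (ha : min (a 0) (a 3) = 0)
    (hb : min (b 0) (b 3) = 0) (h : psi a = psi b) : a = b := by
  obtain ⟨h1, h2, h3, h4⟩ := mk4_injective h
  ext i; fin_cases i <;> simp <;> omega

lemma eq_zero_of_normal_ker {g : MvPolynomial (Fin 4) ℂ}
    (hnorm : ∀ a ∈ g.support, min (a 0) (a 3) = 0) (hg : phi g = 0) : g = 0 := by
  ext b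
  by_cases hb : b ∈ g.support
  · have key : coeff (psi b) (phi g) = coeff b g := by
      conv_lhs => rw [g.as_sum, map_sum]
      simp only [phi_monomial, coeff_sum, coeff_monomial]
      rw [Finset.sum_congr rfl (fun a ha => ?_), Finset.sum_ite_eq' g.support b, if_pos hb]
      by_cases hab : a = b
      · simp [hab]
      · rw [if_neg hab, if_neg (fun hpsi => hab (psi_inj_normal (hnorm a ha) (hnorm b hb) hpsi))]
    rw [hg] at key
    simpa using key.symm
  · simpa using notMem_support_iff.mp hb

lemma ker_phi_le : RingHom.ker phi.toRingHom ≤ relI := by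
  intro f hf
  rw [RingHom.mem_ker] at hf
  have hf' : phi f = 0 := hf
  set g : MvPolynomial (Fin 4) ℂ := ∑ a ∈ f.support, monomial (nf a) (coeff a f) with hgdef
  have hsum : f - g
      = ∑ a ∈ f.support, (monomial a (coeff a f) - monomial (nf a) (coeff a f)) := by
    rw [Finset.sum_sub_distrib, f.support_sum_monomial_coeff]
  have hfg : f - g ∈ relI := by
    rw [hsum]
    exact Ideal.sum_mem _ (fun a _ => monomial_sub_nf a (coeff a f))
  have hphig : phi g = 0 := by
    have heq : phi g = phi f := by
      conv_rhs => rw [← f.support_sum_monomial_coeff]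
      rw [hgdef, map_sum, map_sum]
      simp only [phi_monomial, psi_nf]
    rw [heq, hf']
  have hnorm : ∀ b ∈ g.support, min (b 0) (b 3) = 0 := by
    intro b hb
    have hsub := MvPolynomial.support_sum hb
    simp only [Finset.mem_biUnion] at hsub
    obtain ⟨a, -, hba⟩ := hsub
    have : b = nf a := by
      have := MvPolynomial.support_monomial_subset hba
      simpa using this
    rw [this]
    exact nf_normal a
  have hg0 : g = 0 := eq_zero_of_normal_ker hnorm hphig
  have := Ideal.add_mem relI hfg (hg0 ▸ relI.zero_mem : g ∈ relI)
  simpa using this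

lemma phi_rel : phi ((X 0 : MvPolynomial (Fin 4) ℂ) * X 3 - X 1 * X 2) = 0 := by
  simp only [phi, map_sub, map_mul, aeval_X, Matrix.cons_val_zero, Matrix.cons_val_one,
    Matrix.head_cons, Matrix.cons_val_two, Matrix.tail_cons, Matrix.cons_val_three]
  ring

lemma ker_phi : RingHom.ker phi.toRingHom = relI := by
  refine le_antisymm ker_phi_le ?_
  rw [relI, Ideal.span_le]
  rintro p rfl
  exact RingHom.mem_ker.mpr phi_rel

lemma range_phi : phi.range = Algebra.adjoin ℂ torusGens := by
  rw [phi, ← Algebra.adjoin_range_eq_range_aeval]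
  congr 1
  ext p
  constructor
  · rintro ⟨i, rfl⟩
    fin_cases i <;> simp [torusGens]
  · intro hp
    rcases hp with rfl | rfl | rfl | rfl
    · exact ⟨0, rfl⟩
    · exact ⟨1, rfl⟩
    · exact ⟨2, rfl⟩
    · exact ⟨3, rfl⟩

noncomputable def conifoldEquiv :
    (Algebra.adjoin ℂ torusGens) ≃ₐ[ℂ]
      (MvPolynomial (Fin 4) ℂ ⧸
        Ideal.span {(X 0 : MvPolynomial (Fin 4) ℂ) * X 3 - X 1 * X 2}) := by
  have hker : RingHom.ker phi.rangeRestrict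
      = Ideal.span {(X 0 : MvPolynomial (Fin 4) ℂ) * X 3 - X 1 * X 2} := by
    rw [AlgHom.ker_rangeRestrict]
    exact ker_phi
  exact ((Subalgebra.equivOfEq _ _ range_phi.symm).trans
    (Ideal.quotientKerAlgEquivOfSurjective phi.rangeRestrict_surjective).symm).trans
    (Ideal.quotientEquivAlgOfEq ℂ hker)

lemma invariant_of_balanced {f : MvPolynomial (Fin 4) ℂ}
    (h : ∀ a ∈ f.support, a 0 + a 2 = a 1 + a 3) (l m : ℂˣ) : torusAct l m f = f := by
  conv_rhs => rw [← f.support_sum_monomial_coeff]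
  conv_lhs => rw [← f.support_sum_monomial_coeff, map_sum]
  refine Finset.sum_congr rfl fun a ha => ?_
  rw [torusAct_monomial, h a ha]
  have h1 : ((l:ℂ)⁻¹ * m) * ((l:ℂ) * (m:ℂ)⁻¹) = 1 := by
    field_simp
  rw [← mul_pow, h1, one_pow, one_mul]

theorem torus_invariants_eq_adjoin_and_iso_conifold :
    (∀ f : MvPolynomial (Fin 4) ℂ,
      (∀ l m : ℂˣ, torusAct l m f = f) ↔ f ∈ Algebra.adjoin ℂ torusGens) ∧
    Nonempty ((Algebra.adjoin ℂ torusGens) ≃ₐ[ℂ]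
      (MvPolynomial (Fin 4) ℂ ⧸
        Ideal.span {(X 0 : MvPolynomial (Fin 4) ℂ) * X 3 - X 1 * X 2})) := by
  constructor
  · intro f
    constructor
    · intro hinv
      rw [← f.support_sum_monomial_coeff]
      exact Subalgebra.sum_mem _ fun a ha =>
        monomial_mem_adjoin (balanced_of_invariant hinv ha) _
    · intro hf l m
      induction hf using Algebra.adjoin_induction with
      | mem p hp =>
        apply invariant_of_balanced _ l m
        intro a ha
        simp only [torusGens, Set.mem_insert_iff, Set.mem_singleton_iff] at hp
        rcases hp with rfl | rfl | rfl | rfl <;>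
        · rw [X_mul_X, support_monomial] at ha
          simp only [if_neg one_ne_zero, Finset.mem_singleton] at ha
          subst ha
          simp [Finsupp.single_apply]
      | algebraMap r => exact AlgHom.commutes _ r
      | add x y hx hy ihx ihy => rw [map_add, ihx, ihy]
      | mul x y hx hy ihx ihy => rw [map_mul, ihx, ihy]
  · exact ⟨conifoldEquiv⟩
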